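/- Let ℓ ≥ 1 and let S ⊆ ℤ_n be a complete (ℓ,1)-sum-free set. Then n ≤ C(|S|+ℓ−1, ℓ) + |S|, where C(a,b) denotes the binomial coefficient. -/

import Mathlib

/-- The `m`-fold sumset of `S`: all sums of `m` (not necessarily distinct) elements of `S`. -/
def sumset {Γ : Type*} [AddCommMonoid Γ] (m : ℕ) (S : Set Γ) : Set Γ :=
  {x | ∃ f : Fin m → Γ, (∀ i, f i ∈ S) ∧ ∑ i, f i = x}

lemma sum_mem_sumset {Γ : Type*} [AddCommMonoid Γ] {S : Set Γ} {ℓ : ℕ} {M : Multiset Γ}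
    (hM : ∀ y ∈ M, y ∈ S) (hc : Multiset.card M = ℓ) : M.sum ∈ sumset ℓ S := by
  have hl : M.toList.length = ℓ := by simp [hc]
  refine ⟨fun i => M.toList.get (Fin.cast hl.symm i), ?_, ?_⟩
  · intro i
    exact hM _ (Multiset.mem_toList.mp (M.toList.get_mem _))
  · rw [← Multiset.sum_toList, ← Fin.sum_univ_getElem]
    exact Fintype.sum_equiv (finCongr hl.symm) _ _ (fun i => rfl)

theorem stmt11 (ℓ n : ℕ) (hℓ : 1 ≤ ℓ) (hn : 1 ≤ n) (S : Set (ZMod n))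
    (hdisj : sumset ℓ S ∩ S = ∅) (hcov : sumset ℓ S ∪ S = Set.univ) :
    n ≤ Nat.choose (S.ncard + ℓ - 1) ℓ + S.ncard := by
  haveI : NeZero n := ⟨by omega⟩
  haveI : Fintype ↥S := (Set.toFinite S).fintype
  -- the surjection from multisets onto the sumset
  have hmem : ∀ m : Sym ↥S ℓ, ((m : Multiset ↥S).map Subtype.val).sum ∈ sumset ℓ S := by
    intro m
    apply sum_mem_sumset
    · intro y hy
      obtain ⟨⟨z, hz⟩, _, rfl⟩ := Multiset.mem_map.mp hy
      exact hz
    · simp [m.2]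
  set φ : Sym ↥S ℓ → ↥(sumset ℓ S) :=
    fun m => ⟨((m : Multiset ↥S).map Subtype.val).sum, hmem m⟩ with hφ
  have hsurj : Function.Surjective φ := by
    rintro ⟨x, f, hf, rfl⟩
    refine ⟨⟨Multiset.map (fun i => (⟨f i, hf i⟩ : ↥S)) Finset.univ.val, by simp⟩, ?_⟩
    apply Subtype.ext
    show (Multiset.map Subtype.val (Multiset.map (fun i => (⟨f i, hf i⟩ : ↥S)) Finset.univ.val)).sum = _
    rw [Multiset.map_map]
    rfl
  have h1 : (sumset ℓ S).ncard ≤ Nat.card (Sym ↥S ℓ) :=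
    Nat.card_le_card_of_surjective φ hsurj
  have h2 : Nat.card (Sym ↥S ℓ) = Nat.choose (S.ncard + ℓ - 1) ℓ := by
    rw [Nat.card_eq_fintype_card, Sym.card_sym_eq_multichoose, Nat.multichoose_eq,
      Set.ncard_eq_toFinset_card']
    simp [Set.toFinset_card]
  have h3 : n = (Set.univ : Set (ZMod n)).ncard := by
    rw [Set.ncard_univ, Nat.card_eq_fintype_card, ZMod.card]
  calc n = (Set.univ : Set (ZMod n)).ncard := h3
    _ = (sumset ℓ S ∪ S).ncard := by rw [hcov]
    _ ≤ (sumset ℓ S).ncard + S.ncard := Set.ncard_union_le _ _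
    _ ≤ Nat.choose (S.ncard + ℓ - 1) ℓ + S.ncard := by omega
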